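/- Let H be a Borel probability measure on ℝ, let n ≥ 1, and let ε > 0. Then there exist x, x' ∈ ℝⁿ differing in exactly one coordinate such that ∫_ℝ (F̂_x(t) − F̂_{x'}(t))² dH(t) ≥ 1/n² − ε. Consequently, the base sensitivity of the Cramér–von Mises distance d_CvM^H equals 1/n. -/

import Mathlib

open MeasureTheory Filter

/-- Empirical cdf of a sample `x : Fin n → ℝ`. -/
noncomputable def ecdf {n : ℕ} (x : Fin n → ℝ) (t : ℝ) : ℝ :=
  (Finset.univ.filter (fun i => x i ≤ t)).card / n

/-- Cramér–von Mises distance with base measure `H`. -/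
noncomputable def dCvM (H : Measure ℝ) (F G : ℝ → ℝ) : ℝ :=
  Real.sqrt (∫ t, (F t - G t) ^ 2 ∂H)

lemma ecdf_eq_sum {n : ℕ} (x : Fin n → ℝ) (t : ℝ) :
    ecdf x t = (∑ i : Fin n, if x i ≤ t then (1:ℝ) else 0) / n := by
  unfold ecdf
  rw [Finset.card_filter]
  push_cast
  rfl


lemma measurable_ecdf {n : ℕ} (x : Fin n → ℝ) : Measurable (ecdf x) := by
  have : ecdf x = fun t => (∑ i : Fin n, if x i ≤ t then (1:ℝ) else 0) / n := by
    funext t; exact ecdf_eq_sum x t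
  rw [this]
  apply Measurable.div_const
  apply Finset.measurable_sum
  intro i _
  exact Measurable.ite (measurableSet_Ici (a := x i)) measurable_const measurable_const

lemma abs_ecdf_diff_le {n : ℕ} (hn : 1 ≤ n) (x x' : Fin n → ℝ)
    (h : hammingDist x x' ≤ 1) (t : ℝ) :
    |ecdf x t - ecdf x' t| ≤ 1 / n := by
  have hn0 : (0:ℝ) < n := by exact_mod_cast hn
  rw [ecdf_eq_sum, ecdf_eq_sum, div_sub_div_same, abs_div, abs_of_pos hn0,
    div_le_div_iff_of_pos_right hn0, ← Finset.sum_sub_distrib]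
  set D := Finset.univ.filter (fun i => x i ≠ x' i) with hD
  have hcard : D.card ≤ 1 := h
  have hsum : (∑ i : Fin n, ((if x i ≤ t then (1:ℝ) else 0) - (if x' i ≤ t then 1 else 0)))
      = ∑ i ∈ D, ((if x i ≤ t then (1:ℝ) else 0) - (if x' i ≤ t then 1 else 0)) := by
    refine (Finset.sum_subset (Finset.subset_univ D) ?_).symm
    intro i _ hi
    have : x i = x' i := by
      by_contra hc
      exact hi (by simp [hD, hc])
    simp [this]
  rw [hsum]
  calc |∑ i ∈ D, ((if x i ≤ t then (1:ℝ) else 0) - (if x' i ≤ t then 1 else 0))|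
      ≤ ∑ i ∈ D, |((if x i ≤ t then (1:ℝ) else 0) - (if x' i ≤ t then 1 else 0))| :=
        Finset.abs_sum_le_sum_abs _ _
    _ ≤ ∑ _i ∈ D, (1:ℝ) := by
        refine Finset.sum_le_sum fun i _ => ?_
        split_ifs <;> norm_num
    _ = D.card := by simp
    _ ≤ 1 := by exact_mod_cast hcard

lemma key {n : ℕ} (hn : 1 ≤ n) (H : Measure ℝ) [IsProbabilityMeasure H]
    (δ : ℝ) (hδ : 0 < δ) :
    ∃ x x' : Fin n → ℝ, hammingDist x x' = 1 ∧
      ∫ t, (ecdf x t - ecdf x' t) ^ 2 ∂H ≥ (1 - δ) / (n : ℝ) ^ 2 := by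
  have hn0 : (0:ℝ) < n := by exact_mod_cast hn
  -- find a < b with H (Ico a b) close to 1
  obtain ⟨a, b, hab, hm⟩ : ∃ a b : ℝ, a < b ∧ 1 - δ ≤ (H (Set.Ico a b)).toReal := by
    have hmono : Monotone (fun k : ℕ => Set.Ico (-(k:ℝ)) k) := by
      intro i j hij
      exact Set.Ico_subset_Ico (by exact_mod_cast neg_le_neg (Nat.cast_le.2 hij))
        (by exact_mod_cast hij)
    have hun : ⋃ k : ℕ, Set.Ico (-(k:ℝ)) (k:ℝ) = Set.univ := by
      ext t
      simp only [Set.mem_iUnion, Set.mem_Ico, Set.mem_univ, iff_true]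
      obtain ⟨k, hk⟩ := exists_nat_gt (|t|)
      exact ⟨k, by cases abs_lt.1 hk with | intro h1 h2 => exact ⟨h1.le, h2⟩⟩
    have htend : Tendsto (fun k : ℕ => H (Set.Ico (-(k:ℝ)) k)) atTop (nhds (H Set.univ)) := by
      simpa [hun, Function.comp_def] using tendsto_measure_iUnion_atTop (μ := H) hmono
    have htr : Tendsto (fun k : ℕ => (H (Set.Ico (-(k:ℝ)) k)).toReal) atTop (nhds 1) := by
      have : H Set.univ = 1 := measure_univ
      rw [this] at htend
      simpa [Function.comp_def] using (ENNReal.tendsto_toReal (by norm_num)).comp htend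
    have hev : ∀ᶠ k : ℕ in atTop, 1 - δ < (H (Set.Ico (-(k:ℝ)) k)).toReal :=
      htr.eventually (eventually_gt_nhds (by linarith))
    obtain ⟨k, hk1, hk2⟩ := (hev.and (eventually_ge_atTop 1)).exists
    refine ⟨-(k:ℝ), k, ?_, hk1.le⟩
    have : (1:ℝ) ≤ k := by exact_mod_cast hk2
    linarith
  set i0 : Fin n := ⟨0, hn⟩
  refine ⟨fun _ => a, Function.update (fun _ => a) i0 b, ?_, ?_⟩
  · show (Finset.univ.filter fun i => (fun _ => a) i ≠ Function.update (fun _ => a) i0 b i).card = 1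
    have : (Finset.univ.filter fun i => (fun _ => a) i ≠ Function.update (fun _ => a) i0 b i)
        = {i0} := by
      ext i
      by_cases hi : i = i0 <;> simp [hi, Function.update_apply, hab.ne]
    rw [this, Finset.card_singleton]
  · have hpt : ∀ t, (ecdf (n := n) (fun _ => a) t - ecdf (n := n) (Function.update (fun _ => a) i0 b) t) ^ 2
        = (Set.Ico a b).indicator (fun _ => 1 / (n:ℝ)^2) t := by
      intro t
      rw [ecdf_eq_sum, ecdf_eq_sum, div_sub_div_same, ← Finset.sum_sub_distrib]
      have hsum : (∑ i : Fin n, ((if a ≤ t then (1:ℝ) else 0)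
          - (if Function.update (fun _ => a) i0 b i ≤ t then 1 else 0)))
          = (if a ≤ t then (1:ℝ) else 0) - (if b ≤ t then 1 else 0) := by
        rw [Finset.sum_eq_single i0]
        · simp [Function.update_apply]
        · intro i _ hi
          simp [Function.update_apply, hi]
        · simp
      rw [hsum]
      rcases le_or_gt a t with h1 | h1 <;> rcases le_or_gt b t with h2 | h2
      · simp [Set.indicator_apply, h1, h2, not_lt.2 h2]
      · simp [Set.indicator_apply, h1, h2, not_le.2 h2, div_pow]
      · exact absurd (h2.trans_lt h1) (not_lt.2 hab.le)
      · simp [Set.indicator_apply, not_le.2 h1, h2]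
    rw [integral_congr_ae (Filter.Eventually.of_forall hpt),
      integral_indicator_const _ measurableSet_Ico]
    rw [smul_eq_mul, ge_iff_le, div_le_iff₀ (by positivity), one_div, mul_assoc,
      inv_mul_cancel₀ (by positivity), mul_one]
    exact hm


theorem cvm_base_sensitivity_eq {n : ℕ} (hn : 1 ≤ n)
    (H : Measure ℝ) [IsProbabilityMeasure H] (ε : ℝ) (hε : 0 < ε) :
    (∃ x x' : Fin n → ℝ, hammingDist x x' = 1 ∧
      ∫ t, (ecdf x t - ecdf x' t) ^ 2 ∂H ≥ 1 / (n : ℝ) ^ 2 - ε) ∧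
    sSup {d : ℝ | ∃ x x' : Fin n → ℝ, hammingDist x x' ≤ 1 ∧
      d = dCvM H (ecdf x) (ecdf x')} = 1 / n := by
  have hn0 : (0:ℝ) < n := by exact_mod_cast hn
  set S := {d : ℝ | ∃ x x' : Fin n → ℝ, hammingDist x x' ≤ 1 ∧
      d = dCvM H (ecdf x) (ecdf x')} with hS
  have hub : ∀ d ∈ S, d ≤ 1 / n := by
    rintro d ⟨x, x', hxx', rfl⟩
    have hbd : ∀ t, (ecdf x t - ecdf x' t) ^ 2 ≤ (1 / (n:ℝ)) ^ 2 := fun t => by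
      calc (ecdf x t - ecdf x' t) ^ 2 = |ecdf x t - ecdf x' t| ^ 2 := (sq_abs _).symm
        _ ≤ (1 / n) ^ 2 := pow_le_pow_left₀ (abs_nonneg _) (abs_ecdf_diff_le hn x x' hxx' t) 2
    have hmeas : Measurable (fun t => (ecdf x t - ecdf x' t) ^ 2) :=
      ((measurable_ecdf x).sub (measurable_ecdf x')).pow_const 2
    have hint : Integrable (fun t => (ecdf x t - ecdf x' t) ^ 2) H := by
      refine (integrable_const ((1 / (n:ℝ)) ^ 2)).mono' hmeas.aestronglyMeasurable ?_
      refine Filter.Eventually.of_forall fun t => ?_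
      rw [Real.norm_eq_abs, abs_of_nonneg (sq_nonneg _)]
      exact hbd t
    have hle : ∫ t, (ecdf x t - ecdf x' t) ^ 2 ∂H ≤ (1 / (n:ℝ)) ^ 2 := by
      calc ∫ t, (ecdf x t - ecdf x' t) ^ 2 ∂H ≤ ∫ _t, (1 / (n:ℝ)) ^ 2 ∂H :=
            integral_mono hint (integrable_const _) hbd
        _ = (1 / (n:ℝ)) ^ 2 := by simp
    calc dCvM H (ecdf x) (ecdf x') ≤ Real.sqrt ((1 / (n:ℝ)) ^ 2) :=
          Real.sqrt_le_sqrt hle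
      _ = 1 / n := Real.sqrt_sq (by positivity)
  have hlow : ∀ ε' : ℝ, 0 < ε' → 1 / (n:ℝ) - ε' ≤ sSup S := by
    intro ε' hε'
    obtain ⟨x, x', h1, h2⟩ := key hn H ((n:ℝ) * ε') (by positivity)
    have hmem : dCvM H (ecdf x) (ecdf x') ∈ S := ⟨x, x', h1.le, rfl⟩
    have hdle : dCvM H (ecdf x) (ecdf x') ≤ sSup S :=
      le_csSup ⟨1 / n, hub⟩ hmem
    set c : ℝ := 1 - (n:ℝ) * ε' with hc
    rcases le_or_gt c 0 with hc0 | hc0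
    · have hc0' : 1 - (n:ℝ) * ε' ≤ 0 := hc0
      have : 1 / (n:ℝ) - ε' ≤ 0 := by
        rw [sub_nonpos, div_le_iff₀ hn0, mul_comm]
        linarith
      exact this.trans (Real.sqrt_nonneg _ |>.trans hdle)
    · have hc1 : c ≤ 1 := by nlinarith
      have hsq : c / n ≤ Real.sqrt (c / (n:ℝ) ^ 2) := by
        rw [Real.le_sqrt (by positivity)]
        rw [div_pow, div_le_div_iff₀ (by positivity) (by positivity)]
        have hcc : c ^ 2 ≤ c := by nlinarith
        exact mul_le_mul_of_nonneg_right hcc (by positivity)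
        exact div_nonneg hc0.le (by positivity)
      have : c / n ≤ dCvM H (ecdf x) (ecdf x') := by
        refine hsq.trans (Real.sqrt_le_sqrt ?_)
        exact h2
      have heq : c / (n:ℝ) = 1 / n - ε' := by
        field_simp [hc]
        exact hc
      linarith [this.trans hdle]
  constructor
  · obtain ⟨x, x', h1, h2⟩ := key hn H ((n:ℝ) ^ 2 * ε) (by positivity)
    refine ⟨x, x', h1, ?_⟩
    have : (1 - (n:ℝ) ^ 2 * ε) / (n:ℝ) ^ 2 = 1 / (n:ℝ) ^ 2 - ε := by
      field_simp
    linarith [h2]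
  · refine le_antisymm (Real.sSup_le hub (by positivity)) ?_
    by_contra hlt
    push_neg at hlt
    have := hlow ((1 / (n:ℝ) - sSup S) / 2) (by linarith)
    linarith
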